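/- In a Δ-periodic temporal graph, under the assumptions that P is a fastest temporal path from u to v_i, Q is an alternative u-to-v_i path such that Q followed by R (from v_i to v) is a fastest u-to-v temporal path, and d(u, v_i, P) ≤ d(u, v_i, Q) and d(u, v, Q∪R) ≤ d(u, v, P∪R): the path P extended by the edge v_i v_{i−1} (the last edge of Q reversed) is strictly slower from u to v_{i−1} than the path Q with its last edge removed; formally d(u, v_{i−1}, P ∪ {v_i v_{i−1}}) > d(u, v_{i−1}, Q \ {v_i v_{i−1}}). -/

import Mathlib

/-- The residue of `a - b` modulo `Δ`, taken in `{1, …, Δ}` (value `Δ` when `a ≡ b (mod Δ)`). -/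
def resDelta (Δ : ℕ) (a b : ℤ) : ℤ :=
  if (a - b) % (Δ : ℤ) = 0 then (Δ : ℤ) else (a - b) % (Δ : ℤ)

/-- The starting time of the wasteless temporal traversal of a path whose edges carry the
labels `L` (period `Δ`), starting within the window `[t, t + Δ − 1]`: the first activation
of the first edge at a time `≥ t`. -/
def startT (Δ : ℕ) (t : ℤ) (L : List ℤ) : ℤ := t + (L.head! - t) % (Δ : ℤ)

/-- The arrival time of the wasteless temporal traversal of a path with edge labels `L`,
starting within the window `[t, t + Δ − 1]`: after the first edge, each edge is traversed
at its first activation strictly after the previous traversal time. -/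
def arrT (Δ : ℕ) (t : ℤ) (L : List ℤ) : ℤ :=
  L.tail.foldl (fun s l => s + resDelta Δ l s) (startT Δ t L)

/-- The duration of the wasteless temporal traversal of a path with edge labels `L`,
starting within the window `[t, t + Δ − 1]`. -/
def durT (Δ : ℕ) (t : ℤ) (L : List ℤ) : ℤ := arrT Δ t L - startT Δ t L + 1

section helpers
variable {Δ : ℕ}

lemma resDelta_pos (hΔ : 0 < Δ) (l s : ℤ) : 1 ≤ resDelta Δ l s := by
  unfold resDelta
  have h0 : (0:ℤ) < (Δ:ℤ) := by exact_mod_cast hΔ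
  split
  · exact_mod_cast hΔ
  · rename_i h
    have := Int.emod_nonneg (l - s) (by omega : (Δ:ℤ) ≠ 0)
    omega

lemma resDelta_le (hΔ : 0 < Δ) (l s : ℤ) : resDelta Δ l s ≤ (Δ:ℤ) := by
  unfold resDelta
  have h0 : (0:ℤ) < (Δ:ℤ) := by exact_mod_cast hΔ
  split
  · exact le_refl _
  · exact le_of_lt (Int.emod_lt_of_pos _ h0)

lemma resDelta_mod (l s : ℤ) : (s + resDelta Δ l s - l) % (Δ:ℤ) = 0 := by
  unfold resDelta
  split
  · rename_i h
    have hd : (Δ:ℤ) ∣ (l - s) := Int.dvd_of_emod_eq_zero h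
    have : (Δ:ℤ) ∣ (s + Δ - l) := by
      obtain ⟨c, hc⟩ := hd
      exact ⟨1 - c, by linarith [mul_sub (Δ:ℤ) 1 c]⟩
    exact Int.emod_eq_zero_of_dvd this
  · have h : s + (l - s) % (Δ:ℤ) - l = (l - s) % (Δ:ℤ) - (l - s) := by ring
    rw [h, Int.sub_emod, Int.emod_emod_of_dvd _ (dvd_refl _), sub_self, Int.zero_emod]

lemma resDelta_least (hΔ : 0 < Δ) (l s t : ℤ) (ht : s < t) (hmod : (t - l) % (Δ:ℤ) = 0) :
    s + resDelta Δ l s ≤ t := by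
  have h0 : (0:ℤ) < (Δ:ℤ) := by exact_mod_cast hΔ
  have h1 := resDelta_mod (Δ := Δ) l s
  have hd1 : (Δ:ℤ) ∣ (s + resDelta Δ l s - l) := Int.dvd_of_emod_eq_zero h1
  have hd2 : (Δ:ℤ) ∣ (t - l) := Int.dvd_of_emod_eq_zero hmod
  have hd : (Δ:ℤ) ∣ (t - (s + resDelta Δ l s)) := by
    obtain ⟨c, hc⟩ := hd1; obtain ⟨c', hc'⟩ := hd2
    exact ⟨c' - c, by linarith [mul_sub (Δ:ℤ) c' c]⟩
  by_contra hlt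
  push_neg at hlt
  have hneg : 0 < -(t - (s + resDelta Δ l s)) := by linarith
  have h2 := Int.le_of_dvd hneg (dvd_neg.mpr hd)
  have h3 := resDelta_le hΔ (Δ := Δ) l s
  omega

lemma resDelta_shift (l s k : ℤ) : resDelta Δ l (s + k * (Δ:ℤ)) = resDelta Δ l s := by
  unfold resDelta
  have h : l - (s + k * (Δ:ℤ)) = (l - s) + (Δ:ℤ) * (-k) := by ring
  rw [h, Int.add_mul_emod_self_left]
end helpers

section fold
variable {Δ : ℕ}

lemma step_mono (hΔ : 0 < Δ) (l : ℤ) {x y : ℤ} (h : x ≤ y) :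
    x + resDelta Δ l x ≤ y + resDelta Δ l y := by
  rcases eq_or_lt_of_le h with rfl | hlt
  · exact le_refl _
  · refine resDelta_least hΔ l x _ ?_ ?_
    · have := resDelta_pos hΔ (Δ := Δ) l y; omega
    · exact resDelta_mod l y

lemma fold_mono (hΔ : 0 < Δ) (M : List ℤ) {x y : ℤ} (h : x ≤ y) :
    M.foldl (fun s l => s + resDelta Δ l s) x ≤ M.foldl (fun s l => s + resDelta Δ l s) y := by
  induction M generalizing x y with
  | nil => simpa using h
  | cons l M ih => exact ih (step_mono hΔ l h)

lemma fold_shift (M : List ℤ) (x k : ℤ) :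
    M.foldl (fun s l => s + resDelta Δ l s) (x + k * (Δ:ℤ))
      = M.foldl (fun s l => s + resDelta Δ l s) x + k * (Δ:ℤ) := by
  induction M generalizing x with
  | nil => simp
  | cons l M ih =>
      simp only [List.foldl_cons]
      rw [resDelta_shift]
      have h : x + k * (Δ:ℤ) + resDelta Δ l x = (x + resDelta Δ l x) + k * (Δ:ℤ) := by ring
      rw [h, ih]

lemma fold_mod_eq (M : List ℤ) {x y : ℤ} (h : (x - y) % (Δ:ℤ) = 0) :
    (M.foldl (fun s l => s + resDelta Δ l s) x
      - M.foldl (fun s l => s + resDelta Δ l s) y) % (Δ:ℤ) = 0 := by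
  induction M generalizing x y with
  | nil => simpa using h
  | cons l M ih =>
      simp only [List.foldl_cons]
      apply ih
      have h1 : (Δ:ℤ) ∣ (x + resDelta Δ l x - l) := Int.dvd_of_emod_eq_zero (resDelta_mod l x)
      have h2 : (Δ:ℤ) ∣ (y + resDelta Δ l y - l) := Int.dvd_of_emod_eq_zero (resDelta_mod l y)
      apply Int.emod_eq_zero_of_dvd
      obtain ⟨c, hc⟩ := h1; obtain ⟨c', hc'⟩ := h2
      exact ⟨c - c', by linarith [mul_sub (Δ:ℤ) c c']⟩

lemma fold_mod (M : List ℤ) (hM : M ≠ []) (x y : ℤ) :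
    (M.foldl (fun s l => s + resDelta Δ l s) x
      - M.foldl (fun s l => s + resDelta Δ l s) y) % (Δ:ℤ) = 0 := by
  cases M with
  | nil => exact absurd rfl hM
  | cons l M =>
      simp only [List.foldl_cons]
      apply fold_mod_eq
      have h1 : (Δ:ℤ) ∣ (x + resDelta Δ l x - l) := Int.dvd_of_emod_eq_zero (resDelta_mod l x)
      have h2 : (Δ:ℤ) ∣ (y + resDelta Δ l y - l) := Int.dvd_of_emod_eq_zero (resDelta_mod l y)
      apply Int.emod_eq_zero_of_dvd
      obtain ⟨c, hc⟩ := h1; obtain ⟨c', hc'⟩ := h2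
      exact ⟨c - c', by linarith [mul_sub (Δ:ℤ) c c']⟩

lemma fold_upper (hΔ : 0 < Δ) (M : List ℤ) (x y : ℤ) :
    M.foldl (fun s l => s + resDelta Δ l s) x
      < M.foldl (fun s l => s + resDelta Δ l s) y + (x - y) + (Δ:ℤ) := by
  have h0 : (0:ℤ) < (Δ:ℤ) := by exact_mod_cast hΔ
  obtain ⟨k, hx, hx2⟩ : ∃ k : ℤ, x ≤ y + k * (Δ:ℤ) ∧ y + k * (Δ:ℤ) ≤ x + (Δ:ℤ) - 1 := by
    have hdm := Int.mul_ediv_add_emod (x - y + (Δ:ℤ) - 1) (Δ:ℤ)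
    have hnn := Int.emod_nonneg (x - y + (Δ:ℤ) - 1) (by omega : (Δ:ℤ) ≠ 0)
    have hlt := Int.emod_lt_of_pos (x - y + (Δ:ℤ) - 1) h0
    refine ⟨(x - y + (Δ:ℤ) - 1) / (Δ:ℤ), ?_, ?_⟩ <;> rw [mul_comm] <;> omega
  calc M.foldl (fun s l => s + resDelta Δ l s) x
      ≤ M.foldl (fun s l => s + resDelta Δ l s) (y + k * (Δ:ℤ)) := fold_mono hΔ M hx
    _ = M.foldl (fun s l => s + resDelta Δ l s) y + k * (Δ:ℤ) := fold_shift M y k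
    _ < M.foldl (fun s l => s + resDelta Δ l s) y + (x - y) + (Δ:ℤ) := by omega
end fold

lemma head!_append (L M : List ℤ) (hL : L ≠ []) : (L ++ M).head! = L.head! := by
  cases L with
  | nil => exact absurd rfl hL
  | cons a t => simp [List.head!]

lemma arr_append (Δ : ℕ) (t : ℤ) (L M : List ℤ) (hL : L ≠ []) :
    arrT Δ t (L ++ M) = M.foldl (fun s l => s + resDelta Δ l s) (arrT Δ t L) := by
  cases L with
  | nil => exact absurd rfl hL
  | cons a L' =>
      simp [arrT, startT, List.head!, List.foldl_append]


/-- Under the assumptions of the previous lemma — `P` a fastest path from `u` to `v_i`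
(no slower than `Q`), and `Q` followed by `R` a fastest temporal path from `u` to `v`
(no slower than `P ∪ R`), where `Q = Q' ++ [e]` ends with the edge `e = v_{i−1}v_i` — the
path `P` extended by the reversed last edge of `Q` is strictly slower from `u` to `v_{i−1}`
than `Q` with its last edge removed:
`d(u, v_{i−1}, P ∪ {v_i v_{i−1}}) > d(u, v_{i−1}, Q \ {v_i v_{i−1}})`. -/
theorem stmt11 (Δ : ℕ) (hΔ : 1 ≤ Δ)
    (LP LQ' LR : List ℤ) (e : ℤ) (hP : LP ≠ []) (hQ' : LQ' ≠ []) (hR : LR ≠ [])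
    (hPval : ∀ l ∈ LP, l ∈ Finset.Icc (1 : ℤ) (Δ : ℤ))
    (hQval : ∀ l ∈ LQ', l ∈ Finset.Icc (1 : ℤ) (Δ : ℤ))
    (hRval : ∀ l ∈ LR, l ∈ Finset.Icc (1 : ℤ) (Δ : ℤ))
    (he : e ∈ Finset.Icc (1 : ℤ) (Δ : ℤ))
    (tv : ℤ) (htv : tv = (LQ' ++ [e]).head!)
    (h1 : durT Δ tv LP ≤ durT Δ tv (LQ' ++ [e]))
    (h2 : durT Δ tv ((LQ' ++ [e]) ++ LR) ≤ durT Δ tv (LP ++ LR)) :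
    durT Δ tv LQ' < durT Δ tv (LP ++ [e]) := by
  have hΔ0 : 0 < Δ := hΔ
  have h0 : (0:ℤ) < (Δ:ℤ) := by exact_mod_cast hΔ0
  rw [head!_append _ _ hQ'] at htv
  -- starting times
  have hsQ : startT Δ tv LQ' = tv := by simp [startT, htv]
  have hsQe : startT Δ tv (LQ' ++ [e]) = tv := by
    simp [startT, head!_append _ _ hQ', htv]
  have hsQR : startT Δ tv ((LQ' ++ [e]) ++ LR) = tv := by
    simp [startT, head!_append _ _ (by simp [hQ'] : LQ' ++ [e] ≠ []),
      head!_append _ _ hQ', htv]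
  set sP := startT Δ tv LP with hsP
  have hsPe : startT Δ tv (LP ++ [e]) = sP := by
    simp [startT, head!_append _ _ hP, hsP]
  have hsPR : startT Δ tv (LP ++ LR) = sP := by
    simp [startT, head!_append _ _ hP, hsP]
  have hsPb : tv ≤ sP ∧ sP < tv + (Δ:ℤ) := by
    constructor
    · have := Int.emod_nonneg (LP.head! - tv) (by omega : (Δ:ℤ) ≠ 0); simp [hsP, startT]; omega
    · have := Int.emod_lt_of_pos (LP.head! - tv) h0; simp [hsP, startT]; omega
  -- arrival times
  set A := arrT Δ tv LP with hA
  set C := arrT Δ tv LQ' with hC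
  have hBe : arrT Δ tv (LQ' ++ [e]) = C + resDelta Δ e C := by
    rw [arr_append _ _ _ _ hQ']; simp [hC]
  set B := C + resDelta Δ e C with hB
  have hAe : arrT Δ tv (LP ++ [e]) = A + resDelta Δ e A := by
    rw [arr_append _ _ _ _ hP]; simp [hA]
  set gA := A + resDelta Δ e A with hgA
  have hQR : arrT Δ tv ((LQ' ++ [e]) ++ LR)
      = LR.foldl (fun s l => s + resDelta Δ l s) B := by
    rw [arr_append _ _ _ _ (by simp [hQ'] : LQ' ++ [e] ≠ []), hBe]
  have hPR : arrT Δ tv (LP ++ LR)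
      = LR.foldl (fun s l => s + resDelta Δ l s) A := by
    rw [arr_append _ _ _ _ hP]
  -- rewrite hypotheses and goal
  rw [durT, durT, hQR, hPR, hsQR, hsPR] at h2
  rw [durT, durT, hBe, hsQe, ← hA, ← hsP] at h1
  rw [durT, durT, hAe, hsPe, hsQ, ← hC]
  -- basic facts
  have hBC1 : C < B := by have := resDelta_pos hΔ0 (Δ := Δ) e C; omega
  have hBC2 : B ≤ C + (Δ:ℤ) := by have := resDelta_le hΔ0 (Δ := Δ) e C; omega
  have hBmod : ((Δ:ℤ)) ∣ (B - e) := Int.dvd_of_emod_eq_zero (resDelta_mod e C)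
  have hgA1 : A < gA := by have := resDelta_pos hΔ0 (Δ := Δ) e A; omega
  have hgAmod : ((Δ:ℤ)) ∣ (gA - e) := Int.dvd_of_emod_eq_zero (resDelta_mod e A)
  rcases le_or_gt B A with hcase | hcase
  · -- B ≤ A : gA ≥ B + Δ
    have hd : ((Δ:ℤ)) ∣ (gA - B) := by
      have := dvd_sub hgAmod hBmod
      simpa using this
    have hpos : 0 < gA - B := by omega
    have := Int.le_of_dvd hpos hd
    omega
  · -- A < B
    set D := LR.foldl (fun s l => s + resDelta Δ l s) A
      - LR.foldl (fun s l => s + resDelta Δ l s) B with hD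
    have hD1 : sP - tv ≤ D := by omega
    have hD2 : ((Δ:ℤ)) ∣ D := Int.dvd_of_emod_eq_zero (fold_mod LR hR _ _)
    have hD3 : D < A - B + (Δ:ℤ) := by
      have := fold_upper hΔ0 LR A B; omega
    have hDz : D = 0 := by
      rcases lt_trichotomy D 0 with h | h | h
      · have := Int.le_of_dvd (by omega) (dvd_neg.mpr hD2); omega
      · exact h
      · have := Int.le_of_dvd h hD2; omega
    have hδ : sP = tv := by omega
    rcases lt_or_ge C A with hc | hc
    · omega
    · by_contra hcon
      push_neg at hcon
      -- hcon : gA ≤ C + (sP - tv) = C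
      have hgC : gA ≤ C := by omega
      have hd : ((Δ:ℤ)) ∣ (B - gA) := by
        have := dvd_sub hBmod hgAmod
        simpa using this
      have hpos : 0 < B - gA := by omega
      have := Int.le_of_dvd hpos hd
      omega
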